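/- Let X be a nonempty compact convex subset of ℝ^d, let β > 0, and let φ : ℝ^d → ℝ^d be β-strongly monotone on X, i.e. ⟨φ(x) − φ(x'), x − x'⟩ ≥ (β/2)‖x − x'‖² for all x, x' ∈ X, and let x* ∈ X solve the variational inequality ⟨φ(x*), x − x*⟩ ≥ 0 for all x ∈ X. On a probability space with filtration (𝓕_n)_{n≥0}, let x⁰ ∈ X be 𝓕₀-measurable and for n ≥ 1 let g^n be an 𝓕_n-measurable ℝ^d-valued random vector and define x^n = P_X(x^{n−1} − (γ/n) g^n), where γ > 0 satisfies βγ > 1. Fix constants A, B > 0 and p > 1, and assume that almost surely for every n ≥ 1: ‖E[g^n | 𝓕_{n−1}] − φ(x^{n−1})‖ ≤ A n^{−(1+p)/2} and E[‖g^n‖² | 𝓕_{n−1}] ≤ B. Then there exists a constant C > 0 such that E‖x^n − x*‖² ≤ C n^{−1} for all n ≥ 1; i.e. E‖x^n − x*‖² = O(n^{−1}). -/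

import Mathlib

open MeasureTheory ProbabilityTheory
open scoped RealInnerProductSpace

section ProjAux

variable {E : Type*} [NormedAddCommGroup E] [InnerProductSpace ℝ E]

lemma sdl_aux_inner_le_zero {K : Set E} (hK : Convex ℝ K) {u v : E} (hv : v ∈ K)
    (hmin : ∀ z ∈ K, ‖u - v‖ ≤ ‖u - z‖) : ∀ w ∈ K, ⟪u - v, w - v⟫ ≤ 0 := by
  rw [← norm_eq_iInf_iff_real_inner_le_zero hK hv]
  haveI : Nonempty K := ⟨⟨v, hv⟩⟩
  refine le_antisymm (le_ciInf fun w => hmin w w.2) ?_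
  exact ciInf_le ⟨0, Set.forall_mem_range.2 fun _ => norm_nonneg _⟩ (⟨v, hv⟩ : K)

lemma sdl_aux_min_unique {K : Set E} (hK : Convex ℝ K) {u v v' : E} (hv : v ∈ K) (hv' : v' ∈ K)
    (h1 : ∀ z ∈ K, ‖u - v‖ ≤ ‖u - z‖) (h2 : ∀ z ∈ K, ‖u - v'‖ ≤ ‖u - z‖) : v = v' := by
  have i1 := sdl_aux_inner_le_zero hK hv h1 v' hv'
  have i2 := sdl_aux_inner_le_zero hK hv' h2 v hv
  have key : ⟪v - v', v - v'⟫ ≤ 0 := by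
    have hvv : v - v' = (u - v') - (u - v) := by abel
    have e1 : ⟪v - v', v - v'⟫ = ⟪u - v', v - v'⟫ - ⟪u - v, v - v'⟫ := by
      nth_rewrite 1 [hvv]; rw [inner_sub_left]
    have e2 : ⟪u - v, v - v'⟫ = -⟪u - v, v' - v⟫ := by
      rw [show v - v' = -(v' - v) by abel, inner_neg_right]
    rw [e1, e2]; linarith
  exact sub_eq_zero.mp (real_inner_self_nonpos.mp key)

lemma sdl_aux_contract {K : Set E} (hK : Convex ℝ K) {u v : E} (hv : v ∈ K)
    (hmin : ∀ z ∈ K, ‖u - v‖ ≤ ‖u - z‖) {z : E} (hz : z ∈ K) :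
    ‖v - z‖ ^ 2 ≤ ‖u - z‖ ^ 2 := by
  have hi := sdl_aux_inner_le_zero hK hv hmin z hz
  have hexp : ‖u - z‖ ^ 2 = ‖u - v‖ ^ 2 + 2 * ⟪u - v, v - z⟫ + ‖v - z‖ ^ 2 := by
    rw [show u - z = (u - v) + (v - z) by abel, norm_add_sq_real]
  have hpos : 0 ≤ ⟪u - v, v - z⟫ := by
    have e : ⟪u - v, v - z⟫ = -⟪u - v, z - v⟫ := by
      rw [show v - z = -(z - v) by abel, inner_neg_right]
    linarith
  nlinarith [sq_nonneg ‖u - v‖]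

end ProjAux

lemma sdl_aux_abs_coord_le {d : ℕ} (v : EuclideanSpace ℝ (Fin d)) (i : Fin d) :
    |v i| ≤ ‖v‖ := by
  rw [EuclideanSpace.norm_eq, ← Real.sqrt_sq_eq_abs]
  apply Real.sqrt_le_sqrt
  have : v i ^ 2 = ‖v i‖ ^ 2 := by rw [Real.norm_eq_abs, sq_abs]
  rw [this]
  exact Finset.single_le_sum (f := fun j => ‖v j‖ ^ 2) (fun j _ => sq_nonneg _) (Finset.mem_univ i)

lemma sdl_aux_inner_sum {d : ℕ} (u v : EuclideanSpace ℝ (Fin d)) :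
    ⟪u, v⟫ = ∑ i, v i * u i := by
  rw [PiLp.inner_apply]
  exact Finset.sum_congr rfl fun i _ => by
    simp [RCLike.inner_apply, conj_trivial, mul_comm]

/-- Pull-out of a bounded `m`-measurable factor through the conditional expectation,
coordinatewise, in integrated form. -/
lemma sdl_aux_integral_inner_condexp {Ω : Type*} {m mΩ : MeasurableSpace Ω} {μ : Measure Ω}
    [IsProbabilityMeasure μ] (hm : m ≤ mΩ)
    {d : ℕ} {g : Ω → EuclideanSpace ℝ (Fin d)} (hgint : Integrable g μ)
    {w : Ω → EuclideanSpace ℝ (Fin d)} (hw : StronglyMeasurable[m] w)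
    {D : ℝ} (hwD : ∀ ω, ‖w ω‖ ≤ D) :
    ∫ ω, ⟪g ω, w ω⟫ ∂μ = ∫ ω, ⟪(μ[g|m]) ω, w ω⟫ ∂μ := by
  haveI : IsFiniteMeasure (μ.trim hm) := isFiniteMeasure_trim hm
  haveI : SigmaFinite (μ.trim hm) := inferInstance
  set h : Ω → EuclideanSpace ℝ (Fin d) := μ[g|m] with hh
  have hint : Integrable h μ := integrable_condExp
  have hsm : StronglyMeasurable[m] h := stronglyMeasurable_condExp
  have hwim : ∀ i : Fin d, StronglyMeasurable[m] fun ω => w ω i := fun i =>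
    (EuclideanSpace.proj (𝕜 := ℝ) i).continuous.comp_stronglyMeasurable hw
  have hwibd : ∀ (i : Fin d) ω, ‖w ω i‖ ≤ D := fun i ω =>
    (sdl_aux_abs_coord_le (w ω) i).trans (hwD ω)
  have hhi : ∀ i : Fin d, Integrable (fun ω => h ω i) μ := fun i => by
    have := (EuclideanSpace.proj (𝕜 := ℝ) i).integrable_comp hint
    simpa [PiLp.proj_apply] using this
  have hgi : ∀ i : Fin d, Integrable (fun ω => g ω i) μ := fun i => by
    have := (EuclideanSpace.proj (𝕜 := ℝ) i).integrable_comp hgint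
    simpa [PiLp.proj_apply] using this
  have hco : ∀ i : Fin d, (fun ω => h ω i) =ᵐ[μ] μ[fun ω => g ω i|m] := by
    intro i
    have hmeas' : AEStronglyMeasurable[m] (fun ω => h ω i) μ := by
      have := StronglyMeasurable.aestronglyMeasurable (μ := μ)
        ((EuclideanSpace.proj (𝕜 := ℝ) i).continuous.comp_stronglyMeasurable hsm)
      simpa [PiLp.proj_apply] using this
    refine ae_eq_condExp_of_forall_setIntegral_eq hm (hgi i)
      (fun s _ _ => (hhi i).integrableOn) (fun s hs hμs => ?_) hmeas'
    have e1 := (EuclideanSpace.proj (𝕜 := ℝ) i).integral_comp_comm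
      (μ := μ.restrict s) hint.integrableOn
    have e2 := (EuclideanSpace.proj (𝕜 := ℝ) i).integral_comp_comm
      (μ := μ.restrict s) hgint.integrableOn
    simp only [PiLp.proj_apply] at e1 e2
    rw [e1, e2]
    simp only [hh]
    rw [setIntegral_condExp hm hgint hs]
  calc ∫ ω, ⟪g ω, w ω⟫ ∂μ = ∫ ω, ∑ i, w ω i * g ω i ∂μ := by
        simp_rw [sdl_aux_inner_sum]
    _ = ∑ i, ∫ ω, w ω i * g ω i ∂μ := by
        refine integral_finset_sum _ fun i _ => ?_
        exact (hgi i).bdd_mul ((hwim i).mono hm).aestronglyMeasurable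
          (Filter.Eventually.of_forall (hwibd i))
    _ = ∑ i, ∫ ω, w ω i * h ω i ∂μ := by
        refine Finset.sum_congr rfl fun i _ => ?_
        have h1 : ∫ ω, w ω i * g ω i ∂μ
            = ∫ ω, (μ[(fun ω => w ω i) * (fun ω => g ω i)|m]) ω ∂μ :=
          (integral_condExp hm).symm
        have h2 : μ[(fun ω => w ω i) * (fun ω => g ω i)|m]
            =ᵐ[μ] (fun ω => w ω i) * μ[fun ω => g ω i|m] :=
          condExp_stronglyMeasurable_mul_of_bound hm (hwim i) (hgi i) D
            (Filter.Eventually.of_forall (hwibd i))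
        have h3 : (fun ω => w ω i) * μ[fun ω => g ω i|m]
            =ᵐ[μ] fun ω => w ω i * h ω i := by
          filter_upwards [hco i] with ω hω
          simp only [Pi.mul_apply, hω]
        rw [h1, integral_congr_ae (h2.trans h3)]
    _ = ∫ ω, ∑ i, w ω i * h ω i ∂μ := by
        refine (integral_finset_sum _ fun i _ => ?_).symm
        exact (hhi i).bdd_mul ((hwim i).mono hm).aestronglyMeasurable
          (Filter.Eventually.of_forall (hwibd i))
    _ = ∫ ω, ⟪h ω, w ω⟫ ∂μ := by simp_rw [sdl_aux_inner_sum]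

lemma sdl_aux_chung (c K Dv : ℝ) (hc1 : 1 < c) (hKpos : 0 < K) (hDpos : 0 < Dv)
    (a : ℕ → ℝ) (hnonneg : ∀ n, 0 ≤ a n) (hbdd : ∀ n, a n ≤ Dv ^ 2)
    (hrec : ∀ n : ℕ, a (n+1) ≤ (1 - c / ((n : ℝ) + 1)) * a n + K / ((n : ℝ) + 1) ^ 2) :
    ∀ n : ℕ, 1 ≤ n → a n ≤ (Dv ^ 2 + K + K / (c - 1)) / n := by
  have hc0 : (0:ℝ) < c - 1 := by linarith
  set C : ℝ := Dv ^ 2 + K + K / (c - 1) with hC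
  have hKC0 : 0 < K / (c - 1) := div_pos hKpos hc0
  have hCpos : 0 < C := by
    have : (0:ℝ) < Dv ^ 2 := by positivity
    rw [hC]; linarith
  have hKleC : K ≤ C := by
    have : (0:ℝ) ≤ Dv ^ 2 := sq_nonneg _
    rw [hC]; linarith
  have hKC : K ≤ (c - 1) * C := by
    have h1 : (c - 1) * (K / (c - 1)) = K := by field_simp
    rw [hC]
    nlinarith [mul_nonneg hc0.le (add_nonneg (sq_nonneg Dv) hKpos.le)]
  intro n hn
  induction n, hn using Nat.le_induction with
  | base =>
      simp only [Nat.cast_one, div_one]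
      exact (hbdd 1).trans (by rw [hC]; linarith)
  | succ n hn ih =>
      have hrecn := hrec n
      have hnpos : (0:ℝ) < (n : ℝ) := by exact_mod_cast hn
      have hNpos : (0:ℝ) < (n : ℝ) + 1 := by linarith
      have castgoal : ((n+1 : ℕ) : ℝ) = (n : ℝ) + 1 := by push_cast; ring
      rw [castgoal]
      rcases le_or_gt (1 - c / ((n : ℝ) + 1)) 0 with hcase | hcase
      · have hzero : (1 - c / ((n : ℝ) + 1)) * a n ≤ 0 :=
          mul_nonpos_of_nonpos_of_nonneg hcase (hnonneg n)
        have hfin : K / ((n : ℝ) + 1) ^ 2 ≤ C / ((n : ℝ) + 1) := by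
          rw [div_le_div_iff₀ (by positivity) hNpos]
          have hKCn : (0:ℝ) ≤ C * ((n : ℝ) + 1) - K := by
            nlinarith [hKleC, mul_nonneg hCpos.le hnpos.le]
          nlinarith [mul_nonneg hNpos.le hKCn]
        linarith
      · have step : (1 - c / ((n : ℝ) + 1)) * a n ≤ (1 - c / ((n : ℝ) + 1)) * (C / (n : ℝ)) :=
          mul_le_mul_of_nonneg_left ih hcase.le
        have key : (1 - c / ((n : ℝ) + 1)) * (C / (n : ℝ)) + K / ((n : ℝ) + 1) ^ 2
            ≤ C / ((n : ℝ) + 1) := by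
          rw [← sub_nonneg]
          have expand : C / ((n : ℝ) + 1)
              - ((1 - c / ((n : ℝ) + 1)) * (C / (n : ℝ)) + K / ((n : ℝ) + 1) ^ 2)
              = ((c - 1) * C * ((n : ℝ) + 1) - K * (n : ℝ))
                / ((n : ℝ) * ((n : ℝ) + 1) ^ 2) := by
            field_simp
            ring
          rw [expand]
          apply div_nonneg _ (by positivity)
          have h1 : K * (n : ℝ) ≤ (c - 1) * C * (n : ℝ) :=
            mul_le_mul_of_nonneg_right hKC hnpos.le
          have h2 : (c - 1) * C * (n : ℝ) ≤ (c - 1) * C * ((n : ℝ) + 1) := by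
            nlinarith [mul_pos hc0 hCpos]
          linarith
        linarith

theorem sdl_mean_square_rate_b
    (d : ℕ) (X : Set (EuclideanSpace ℝ (Fin d)))
    (hXne : X.Nonempty) (hXcompact : IsCompact X) (hXconv : Convex ℝ X)
    (β : ℝ) (hβ : 0 < β)
    (φ : EuclideanSpace ℝ (Fin d) → EuclideanSpace ℝ (Fin d))
    (hmono : ∀ y ∈ X, ∀ y' ∈ X, β / 2 * ‖y - y'‖ ^ 2 ≤ ⟪φ y - φ y', y - y'⟫)
    (xstar : EuclideanSpace ℝ (Fin d)) (hxstar : xstar ∈ X)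
    (hVI : ∀ y ∈ X, 0 ≤ ⟪φ xstar, y - xstar⟫)
    {Ω : Type*} {mΩ : MeasurableSpace Ω} (μ : Measure Ω) [IsProbabilityMeasure μ]
    (𝓕 : Filtration ℕ mΩ)
    (x g : ℕ → Ω → EuclideanSpace ℝ (Fin d))
    (γ : ℝ) (hγ : 0 < γ) (hβγ : 1 < β * γ)
    (hx0meas : StronglyMeasurable[𝓕 0] (x 0)) (hx0X : ∀ ω, x 0 ω ∈ X)
    (hgmeas : ∀ n : ℕ, 1 ≤ n → StronglyMeasurable[𝓕 n] (g n))
    (hgL2 : ∀ n : ℕ, 1 ≤ n → MemLp (g n) 2 μ)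
    (hiter : ∀ n : ℕ, 1 ≤ n → ∀ ω, x n ω ∈ X ∧
      ∀ z ∈ X, ‖x (n - 1) ω - (γ / n) • g n ω - x n ω‖
        ≤ ‖x (n - 1) ω - (γ / n) • g n ω - z‖)
    (A B p : ℝ) (hA : 0 < A) (hB : 0 < B) (hp : 1 < p)
    (hbias : ∀ᵐ ω ∂μ, ∀ n : ℕ, 1 ≤ n →
      ‖(μ[g n | 𝓕 (n - 1)]) ω - φ (x (n - 1) ω)‖ ≤ A * (n : ℝ) ^ (-(1 + p) / 2))
    (hmoment : ∀ᵐ ω ∂μ, ∀ n : ℕ, 1 ≤ n →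
      (μ[fun ω' => ‖g n ω'‖ ^ 2 | 𝓕 (n - 1)]) ω ≤ B) :
    ∃ C > (0 : ℝ), ∀ n : ℕ, 1 ≤ n →
      ∫ ω, ‖x n ω - xstar‖ ^ 2 ∂μ ≤ C * (n : ℝ)⁻¹ := by
  classical
  -- a bound on the diameter of `X`
  obtain ⟨D0, hD0⟩ := Metric.isBounded_iff.mp hXcompact.isBounded
  set D : ℝ := max D0 1 with hDdef
  have hD1 : (1:ℝ) ≤ D := le_max_right _ _
  have hDpos : (0:ℝ) < D := lt_of_lt_of_le one_pos hD1
  have hDX : ∀ y ∈ X, ‖y - xstar‖ ≤ D := fun y hy => by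
    rw [← dist_eq_norm]; exact (hD0 hy hxstar).trans (le_max_left _ _)
  -- the metric projection onto `X`
  have exist : ∀ u : EuclideanSpace ℝ (Fin d), ∃ v, v ∈ X ∧ ∀ z ∈ X, ‖u - v‖ ≤ ‖u - z‖ := by
    intro u
    obtain ⟨v, hvX, hvmin⟩ := hXcompact.exists_isMinOn hXne
      ((continuous_const.sub continuous_id).norm.continuousOn
        (s := X) : ContinuousOn (fun z => ‖u - z‖) X)
    exact ⟨v, hvX, fun z hz => isMinOn_iff.mp hvmin z hz⟩
  choose P hPX hPmin using exist
  have hPlip : ∀ u u', ‖P u - P u'‖ ≤ ‖u - u'‖ := by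
    intro u u'
    have i1 := sdl_aux_inner_le_zero hXconv (hPX u) (hPmin u) (P u') (hPX u')
    have i2 := sdl_aux_inner_le_zero hXconv (hPX u') (hPmin u') (P u) (hPX u)
    have key : ‖P u - P u'‖ ^ 2 ≤ ⟪u - u', P u - P u'⟫ := by
      have e : ⟪u - u', P u - P u'⟫
          = ⟪P u - P u', P u - P u'⟫ + (-⟪u - P u, P u' - P u⟫)
            + (-⟪u' - P u', P u - P u'⟫) := by
        have hd : u - u' = (P u - P u') + (u - P u) - (u' - P u') := by abel
        rw [hd, inner_sub_left, inner_add_left]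
        rw [show ⟪u - P u, P u - P u'⟫ = -⟪u - P u, P u' - P u⟫ by
          rw [show P u - P u' = -(P u' - P u) by abel, inner_neg_right]]
        ring
      rw [real_inner_self_eq_norm_sq] at e
      linarith
    have hcs := real_inner_le_norm (u - u') (P u - P u')
    nlinarith [norm_nonneg (P u - P u'), norm_nonneg (u - u'),
      mul_self_nonneg (‖P u - P u'‖ - ‖u - u'‖)]
  have hPcont : Continuous P := by
    refine (LipschitzWith.of_dist_le_mul (K := 1) fun u u' => ?_).continuous
    rw [NNReal.coe_one, one_mul, dist_eq_norm, dist_eq_norm]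
    exact hPlip u u'
  -- identification of the iterates with projections, membership, measurability
  have hn1 : ∀ n : ℕ, 1 ≤ n + 1 := fun n => Nat.le_add_left 1 n
  have hxP : ∀ (n : ℕ) ω, x (n+1) ω = P (x n ω - (γ / ((n+1 : ℕ) : ℝ)) • g (n+1) ω) := by
    intro n ω
    have h := hiter (n+1) (hn1 n) ω
    exact sdl_aux_min_unique hXconv h.1 (hPX _) (fun z hz => h.2 z hz) (hPmin _)
  have hxX : ∀ n ω, x n ω ∈ X := by
    intro n ω
    cases n with
    | zero => exact hx0X ω
    | succ k => exact (hiter (k+1) (hn1 k) ω).1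
  have hxmeas : ∀ n, StronglyMeasurable[𝓕 n] (x n) := by
    intro n
    induction n with
    | zero => exact hx0meas
    | succ k ih =>
        have he : x (k+1) = fun ω => P (x k ω - (γ / ((k+1 : ℕ) : ℝ)) • g (k+1) ω) :=
          funext fun ω => hxP k ω
        rw [he]
        exact hPcont.comp_stronglyMeasurable
          ((ih.mono (𝓕.mono (Nat.le_succ k))).sub
            ((hgmeas (k+1) (hn1 k)).const_smul (γ / ((k+1 : ℕ) : ℝ))))
  -- integrability of the squared distances
  have haint : ∀ n, Integrable (fun ω => ‖x n ω - xstar‖ ^ 2) μ := by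
    intro n
    have hsm : StronglyMeasurable (fun ω => ‖x n ω - xstar‖ ^ 2) :=
      (((hxmeas n).mono (𝓕.le n)).sub stronglyMeasurable_const).norm.pow 2
    refine Integrable.mono' (integrable_const (D ^ 2)) hsm.aestronglyMeasurable
      (Filter.Eventually.of_forall fun ω => ?_)
    rw [Real.norm_eq_abs, abs_of_nonneg (sq_nonneg _)]
    exact pow_le_pow_left₀ (norm_nonneg _) (hDX _ (hxX n ω)) 2
  have hanonneg : ∀ n, 0 ≤ ∫ ω, ‖x n ω - xstar‖ ^ 2 ∂μ := fun n =>
    integral_nonneg fun ω => sq_nonneg _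
  have haD : ∀ n, ∫ ω, ‖x n ω - xstar‖ ^ 2 ∂μ ≤ D ^ 2 := by
    intro n
    calc ∫ ω, ‖x n ω - xstar‖ ^ 2 ∂μ ≤ ∫ _ω, D ^ 2 ∂μ :=
          integral_mono (haint n) (integrable_const _)
            (fun ω => pow_le_pow_left₀ (norm_nonneg _) (hDX _ (hxX n ω)) 2)
      _ = D ^ 2 := by simp
  -- constants
  set c : ℝ := β * γ with hc
  have hc1 : (1:ℝ) < c := hβγ
  have hc0 : (0:ℝ) < c - 1 := by linarith
  set K : ℝ := 2 * γ * A * D + γ ^ 2 * B with hK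
  have hKpos : 0 < K := by positivity
  -- the one-step recursion
  have hrec : ∀ n : ℕ,
      ∫ ω, ‖x (n+1) ω - xstar‖ ^ 2 ∂μ
        ≤ (1 - c / ((n : ℝ) + 1)) * ∫ ω, ‖x n ω - xstar‖ ^ 2 ∂μ + K / ((n : ℝ) + 1) ^ 2 := by
    intro n
    have hm : 𝓕 n ≤ mΩ := 𝓕.le n
    haveI : IsFiniteMeasure (μ.trim hm) := isFiniteMeasure_trim hm
    haveI : SigmaFinite (μ.trim hm) := inferInstance
    set N : ℝ := ((n+1 : ℕ) : ℝ) with hN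
    have hNval : N = (n : ℝ) + 1 := by rw [hN]; push_cast; ring
    have hN1 : (1:ℝ) ≤ N := by rw [hN]; exact_mod_cast hn1 n
    have hNpos : (0:ℝ) < N := lt_of_lt_of_le one_pos hN1
    set η : ℝ := γ / N with hη
    have hηpos : 0 < η := div_pos hγ hNpos
    set G : Ω → EuclideanSpace ℝ (Fin d) := g (n+1) with hG
    set w : Ω → EuclideanSpace ℝ (Fin d) := fun ω => x n ω - xstar with hwdef
    have hGint : Integrable G μ := (hgL2 (n+1) (hn1 n)).integrable one_le_two
    have hGae : AEStronglyMeasurable G μ := hGint.1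
    have hwm : StronglyMeasurable[𝓕 n] w := (hxmeas n).sub stronglyMeasurable_const
    have hwae : AEStronglyMeasurable w μ := (hwm.mono hm).aestronglyMeasurable
    have hwD : ∀ ω, ‖w ω‖ ≤ D := fun ω => hDX _ (hxX n ω)
    -- pointwise descent inequality
    have hpt : ∀ ω, ‖x (n+1) ω - xstar‖ ^ 2
        ≤ ‖w ω‖ ^ 2 - 2 * η * ⟪G ω, w ω⟫ + η ^ 2 * ‖G ω‖ ^ 2 := by
      intro ω
      have hcontr := sdl_aux_contract hXconv (hiter (n+1) (hn1 n) ω).1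
        (fun z hz => (hiter (n+1) (hn1 n) ω).2 z hz) hxstar
      simp only [Nat.add_sub_cancel] at hcontr
      have hηe : γ / ((n+1 : ℕ) : ℝ) = η := by rw [hη, hN]
      have e : x n ω - (γ / ((n+1 : ℕ) : ℝ)) • G ω - xstar = w ω - η • G ω := by
        rw [hηe, hwdef]; exact sub_right_comm _ _ _
      rw [e] at hcontr
      calc ‖x (n+1) ω - xstar‖ ^ 2 ≤ ‖w ω - η • G ω‖ ^ 2 := hcontr
        _ = ‖w ω‖ ^ 2 - 2 * η * ⟪G ω, w ω⟫ + η ^ 2 * ‖G ω‖ ^ 2 := by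
            rw [norm_sub_sq_real, real_inner_smul_right, real_inner_comm (w ω) (G ω),
              norm_smul, Real.norm_eq_abs, mul_pow, sq_abs]
            ring
    -- integrability of the pieces
    have hI2 : Integrable (fun ω => ⟪G ω, w ω⟫) μ := by
      refine Integrable.mono' (hGint.norm.mul_const D) (hGae.inner hwae)
        (Filter.Eventually.of_forall fun ω => ?_)
      rw [Real.norm_eq_abs]
      exact (abs_real_inner_le_norm _ _).trans
        (mul_le_mul_of_nonneg_left (hwD ω) (norm_nonneg _))
    have hI3 : Integrable (fun ω => ‖G ω‖ ^ 2) μ := (hgL2 (n+1) (hn1 n)).norm.integrable_sq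
    have hwint : Integrable (fun ω => ‖w ω‖ ^ 2) μ := haint n
    -- integrate the descent inequality
    have hFint : Integrable
        (fun ω => ‖w ω‖ ^ 2 - 2 * η * ⟪G ω, w ω⟫ + η ^ 2 * ‖G ω‖ ^ 2) μ :=
      (hwint.sub (hI2.const_mul (2 * η))).add (hI3.const_mul (η ^ 2))
    have hstep1 : ∫ ω, ‖x (n+1) ω - xstar‖ ^ 2 ∂μ
        ≤ (∫ ω, ‖w ω‖ ^ 2 ∂μ) - 2 * η * (∫ ω, ⟪G ω, w ω⟫ ∂μ)
          + η ^ 2 * (∫ ω, ‖G ω‖ ^ 2 ∂μ) := by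
      calc ∫ ω, ‖x (n+1) ω - xstar‖ ^ 2 ∂μ
          ≤ ∫ ω, (‖w ω‖ ^ 2 - 2 * η * ⟪G ω, w ω⟫ + η ^ 2 * ‖G ω‖ ^ 2) ∂μ :=
            integral_mono (haint (n+1)) hFint hpt
        _ = (∫ ω, ‖w ω‖ ^ 2 ∂μ) - 2 * η * (∫ ω, ⟪G ω, w ω⟫ ∂μ)
            + η ^ 2 * (∫ ω, ‖G ω‖ ^ 2 ∂μ) := by
            have e1 : ∫ ω, (‖w ω‖ ^ 2 - 2 * η * ⟪G ω, w ω⟫ + η ^ 2 * ‖G ω‖ ^ 2) ∂μ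
                = (∫ ω, (‖w ω‖ ^ 2 - 2 * η * ⟪G ω, w ω⟫) ∂μ)
                  + ∫ ω, η ^ 2 * ‖G ω‖ ^ 2 ∂μ :=
              integral_add (hwint.sub (hI2.const_mul (2 * η))) (hI3.const_mul (η ^ 2))
            have e2 : ∫ ω, (‖w ω‖ ^ 2 - 2 * η * ⟪G ω, w ω⟫) ∂μ
                = (∫ ω, ‖w ω‖ ^ 2 ∂μ) - ∫ ω, 2 * η * ⟪G ω, w ω⟫ ∂μ :=
              integral_sub hwint (hI2.const_mul (2 * η))
            have e3 : ∫ ω, 2 * η * ⟪G ω, w ω⟫ ∂μ = 2 * η * ∫ ω, ⟪G ω, w ω⟫ ∂μ :=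
              integral_const_mul _ _
            have e4 : ∫ ω, η ^ 2 * ‖G ω‖ ^ 2 ∂μ = η ^ 2 * ∫ ω, ‖G ω‖ ^ 2 ∂μ :=
              integral_const_mul _ _
            rw [e1, e2, e3, e4]
    -- second-moment bound
    have hm3 : ∫ ω, ‖G ω‖ ^ 2 ∂μ ≤ B := by
      have hmom : ∀ᵐ ω ∂μ, (μ[fun ω' => ‖G ω'‖ ^ 2|𝓕 n]) ω ≤ B := by
        filter_upwards [hmoment] with ω hω
        exact hω (n+1) (hn1 n)
      calc ∫ ω, ‖G ω‖ ^ 2 ∂μ = ∫ ω, (μ[fun ω' => ‖G ω'‖ ^ 2|𝓕 n]) ω ∂μ :=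
            (integral_condExp hm).symm
        _ ≤ ∫ _ω, B ∂μ := integral_mono_ae integrable_condExp (integrable_const B) hmom
        _ = B := by simp
    -- the conditional expectation of the gradient estimate
    set h : Ω → EuclideanSpace ℝ (Fin d) := μ[G|𝓕 n] with hhdef
    have hpull : ∫ ω, ⟪G ω, w ω⟫ ∂μ = ∫ ω, ⟪h ω, w ω⟫ ∂μ :=
      sdl_aux_integral_inner_condexp hm hGint hwm hwD
    have hhint : Integrable h μ := integrable_condExp
    have hIhw : Integrable (fun ω => ⟪h ω, w ω⟫) μ := by
      refine Integrable.mono' (hhint.norm.mul_const D)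
        (((stronglyMeasurable_condExp.mono hm).aestronglyMeasurable).inner hwae)
        (Filter.Eventually.of_forall fun ω => ?_)
      rw [Real.norm_eq_abs]
      exact (abs_real_inner_le_norm _ _).trans
        (mul_le_mul_of_nonneg_left (hwD ω) (norm_nonneg _))
    -- a.e. lower bound for `⟪h, w⟫`
    have hbias' : ∀ᵐ ω ∂μ, ‖h ω - φ (x n ω)‖ ≤ A * N ^ (-(1 + p) / 2) := by
      filter_upwards [hbias] with ω hω
      exact hω (n+1) (hn1 n)
    have hptlow : ∀ᵐ ω ∂μ,
        β / 2 * ‖w ω‖ ^ 2 - A * N ^ (-(1 + p) / 2) * D ≤ ⟪h ω, w ω⟫ := by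
      filter_upwards [hbias'] with ω hb
      have h1 : β / 2 * ‖w ω‖ ^ 2 ≤ ⟪φ (x n ω) - φ xstar, w ω⟫ :=
        hmono _ (hxX n ω) _ hxstar
      have h2 : 0 ≤ ⟪φ xstar, w ω⟫ := hVI _ (hxX n ω)
      have h3 : -(A * N ^ (-(1 + p) / 2) * D) ≤ ⟪h ω - φ (x n ω), w ω⟫ := by
        have hcs := abs_real_inner_le_norm (h ω - φ (x n ω)) (w ω)
        have hmul : ‖h ω - φ (x n ω)‖ * ‖w ω‖ ≤ A * N ^ (-(1 + p) / 2) * D :=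
          mul_le_mul hb (hwD ω) (norm_nonneg _) (by positivity)
        have hna := neg_abs_le ⟪h ω - φ (x n ω), w ω⟫
        linarith
      have hsplit : ⟪h ω, w ω⟫
          = ⟪φ (x n ω) - φ xstar, w ω⟫ + ⟪φ xstar, w ω⟫ + ⟪h ω - φ (x n ω), w ω⟫ := by
        rw [← inner_add_left, ← inner_add_left]
        congr 1
        abel
      rw [hsplit]
      linarith
    have hlow : β / 2 * (∫ ω, ‖w ω‖ ^ 2 ∂μ) - A * N ^ (-(1 + p) / 2) * D
        ≤ ∫ ω, ⟪h ω, w ω⟫ ∂μ := by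
      have hLint : Integrable
          (fun ω => β / 2 * ‖w ω‖ ^ 2 - A * N ^ (-(1 + p) / 2) * D) μ :=
        (hwint.const_mul (β / 2)).sub (integrable_const _)
      have hle := integral_mono_ae hLint hIhw hptlow
      rwa [integral_sub (hwint.const_mul (β / 2)) (integrable_const _),
        integral_const_mul, integral_const, probReal_univ, one_smul] at hle
    -- the exponent comparison
    have hNq : N ^ (-(1 + p) / 2) ≤ N⁻¹ := by
      have hle := Real.rpow_le_rpow_of_exponent_le hN1
        (show (-(1 + p) / 2 : ℝ) ≤ -1 by linarith)
      rwa [show ((-1 : ℝ)) = -(1:ℝ) by norm_num, Real.rpow_neg (by positivity),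
        Real.rpow_one] at hle
    -- assemble
    have t1 : 2 * η * (β / 2 * (∫ ω, ‖w ω‖ ^ 2 ∂μ) - A * N ^ (-(1 + p) / 2) * D)
        ≤ 2 * η * (∫ ω, ⟪h ω, w ω⟫ ∂μ) :=
      mul_le_mul_of_nonneg_left hlow (by positivity)
    have t2 : η ^ 2 * (∫ ω, ‖G ω‖ ^ 2 ∂μ) ≤ η ^ 2 * B :=
      mul_le_mul_of_nonneg_left hm3 (sq_nonneg η)
    have hcoef : η * β = c / N := by rw [hη, hc]; ring
    have hη2 : η ^ 2 * B = γ ^ 2 * B / N ^ 2 := by rw [hη]; ring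
    have hterm : 2 * η * (A * N ^ (-(1 + p) / 2) * D) ≤ 2 * γ * A * D / N ^ 2 := by
      have e : 2 * η * (A * N ^ (-(1 + p) / 2) * D)
          = (2 * γ * A * D) * N ^ (-(1 + p) / 2) / N := by rw [hη]; ring
      rw [e]
      calc (2 * γ * A * D) * N ^ (-(1 + p) / 2) / N
          ≤ (2 * γ * A * D) * N⁻¹ / N := by gcongr
        _ = 2 * γ * A * D / N ^ 2 := by
            field_simp
    rw [hpull] at hstep1
    have hcoefI0 : η * β * (∫ ω, ‖w ω‖ ^ 2 ∂μ) = c / N * (∫ ω, ‖w ω‖ ^ 2 ∂μ) := by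
      rw [hcoef]
    have hKdiv : K / N ^ 2 = 2 * γ * A * D / N ^ 2 + γ ^ 2 * B / N ^ 2 := by
      rw [hK]; ring
    have hfinal : ∫ ω, ‖x (n+1) ω - xstar‖ ^ 2 ∂μ
        ≤ (1 - c / N) * (∫ ω, ‖w ω‖ ^ 2 ∂μ) + K / N ^ 2 := by
      linarith [hstep1, t1, t2, hterm, hη2, hKdiv, hcoefI0]
    rw [hNval] at hfinal
    exact hfinal
  -- conclude via the Chung-type induction
  have hc0 : (0:ℝ) < c - 1 := by linarith
  have main := sdl_aux_chung c K D hc1 hKpos hDpos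
    (fun n => ∫ ω, ‖x n ω - xstar‖ ^ 2 ∂μ) hanonneg haD hrec
  refine ⟨D ^ 2 + K + K / (c - 1), ?_, fun n hn => ?_⟩
  · have h1 : 0 < K / (c - 1) := div_pos hKpos hc0
    have h2 : (0:ℝ) < D ^ 2 := by positivity
    linarith
  · have h := main n hn
    rwa [div_eq_mul_inv] at h
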